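/- Let m ≥ 1, let F : ℝ^m → ℝ be C³ and homogeneous of degree 6, and set f = ∇F. Let Q : ℝ^3 → ℝ^m be C² and satisfy −ΔQ(x) = f(Q(x)) for all x ∈ ℝ^3, and suppose there is a constant C > 0 with |Q(x)| ≤ C(1+|x|)^{−1} and |∇Q(x)| ≤ C(1+|x|)^{−2} for all x. Then the integrals ∫_{ℝ^3} |∇Q|² dx and ∫_{ℝ^3} F(Q) dx converge, ∫_{ℝ^3} |∇Q(x)|² dx = 6 ∫_{ℝ^3} F(Q(x)) dx, and consequently the energy E(Q) := (1/2)∫_{ℝ^3}|∇Q|² dx − ∫_{ℝ^3} F(Q) dx equals (1/3)∫_{ℝ^3}|∇Q|² dx. -/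

import Mathlib

open MeasureTheory Set Metric Filter Topology

/-- Componentwise Laplacian of a function on `ℝ³`. -/
noncomputable def lap3 {F : Type*} [NormedAddCommGroup F] [NormedSpace ℝ F]
    (u : EuclideanSpace ℝ (Fin 3) → F) (x : EuclideanSpace ℝ (Fin 3)) : F :=
  ∑ i : Fin 3,
    fderiv ℝ (fun y => fderiv ℝ u y (EuclideanSpace.single i 1)) x
      (EuclideanSpace.single i 1)

/-- `|∇u(x)|²`: the sum of squares of all partial derivatives of all components. -/
noncomputable def gradSq {F : Type*} [NormedAddCommGroup F] [NormedSpace ℝ F]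
    (u : EuclideanSpace ℝ (Fin 3) → F) (x : EuclideanSpace ℝ (Fin 3)) : ℝ :=
  ∑ i : Fin 3, ‖fderiv ℝ u x (EuclideanSpace.single i 1)‖ ^ 2

noncomputable abbrev eL3 : EuclideanSpace ℝ (Fin 3) ≃L[ℝ] (Fin 3 → ℝ) :=
  EuclideanSpace.equiv (Fin 3) ℝ

/-- `i`-th partial derivative of `Q`. -/
noncomputable def pdQ {m : ℕ} (Q : EuclideanSpace ℝ (Fin 3) → EuclideanSpace ℝ (Fin m))
    (i : Fin 3) (x : EuclideanSpace ℝ (Fin 3)) : EuclideanSpace ℝ (Fin m) :=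
  fderiv ℝ Q x (EuclideanSpace.single i 1)

/-- The components of the vector field `x ↦ (⟪∂ᵢQ(x), Q(x)⟫)ᵢ`, transported to `Fin 3 → ℝ`. -/
noncomputable def gfun {m : ℕ} (Q : EuclideanSpace ℝ (Fin 3) → EuclideanSpace ℝ (Fin m))
    (i : Fin 3) (y : Fin 3 → ℝ) : ℝ :=
  inner ℝ (pdQ Q i (eL3.symm y)) (Q (eL3.symm y))

/-- The derivative of `gfun`. -/
noncomputable def gder {m : ℕ} (Q : EuclideanSpace ℝ (Fin 3) → EuclideanSpace ℝ (Fin m))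
    (i : Fin 3) (y : Fin 3 → ℝ) : (Fin 3 → ℝ) →L[ℝ] ℝ :=
  ((fderivInnerCLM ℝ (pdQ Q i (eL3.symm y), Q (eL3.symm y))).comp
    ((((ContinuousLinearMap.apply ℝ (EuclideanSpace ℝ (Fin m))
        (EuclideanSpace.single i (1:ℝ))).comp
          (fderiv ℝ (fderiv ℝ Q) (eL3.symm y)))).prod
      (fderiv ℝ Q (eL3.symm y)))).comp
    (eL3.symm : (Fin 3 → ℝ) →L[ℝ] EuclideanSpace ℝ (Fin 3))

set_option maxHeartbeats 1000000 in
theorem stmt6 (m : ℕ) (hm : 1 ≤ m)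
    (F : EuclideanSpace ℝ (Fin m) → ℝ) (hF : ContDiff ℝ 3 F)
    (hhom : ∀ c : ℝ, 0 ≤ c → ∀ x, F (c • x) = c ^ 6 * F x)
    (Q : EuclideanSpace ℝ (Fin 3) → EuclideanSpace ℝ (Fin m))
    (hQ : ContDiff ℝ 2 Q)
    (heq : ∀ x, -(lap3 Q x) = gradient F (Q x))
    (C : ℝ) (hC : 0 < C)
    (hdecay : ∀ x, ‖Q x‖ ≤ C / (1 + ‖x‖))
    (hdecay' : ∀ x, Real.sqrt (gradSq Q x) ≤ C / (1 + ‖x‖) ^ 2) :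
    Integrable (fun x => gradSq Q x) ∧
    Integrable (fun x => F (Q x)) ∧
    (∫ x, gradSq Q x) = 6 * ∫ x, F (Q x) ∧
    (1 / 2) * (∫ x, gradSq Q x) - (∫ x, F (Q x)) = (1 / 3) * ∫ x, gradSq Q x := by
  -- Basic regularity facts
  have hQ1 : Differentiable ℝ Q := hQ.differentiable (by norm_num)
  have hQc : Continuous Q := hQ1.continuous
  have hDQ : ContDiff ℝ 1 (fderiv ℝ Q) := hQ.fderiv_right (by norm_num)
  have hDQc : Continuous (fderiv ℝ Q) := hDQ.continuous
  have hB : ∀ x, HasFDerivAt (fderiv ℝ Q) (fderiv ℝ (fderiv ℝ Q) x) x :=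
    fun x => (hDQ.differentiable (by norm_num) x).hasFDerivAt
  -- Euler identity
  have euler : ∀ v, (inner ℝ (gradient F v) v : ℝ) = 6 * F v := by
    intro v
    have hd : DifferentiableAt ℝ F v := (hF.differentiable (by norm_num)).differentiableAt
    have hd' : HasFDerivAt F (fderiv ℝ F v) ((1:ℝ) • v) := by simpa using hd.hasFDerivAt
    have h1 : HasDerivAt (fun c : ℝ => F (c • v)) (fderiv ℝ F v v) 1 := by
      have := hd'.comp_hasDerivAt (x := (1:ℝ)) ((hasDerivAt_id (1:ℝ)).smul_const v)
      simp only [one_smul] at this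
      exact this
    have h2 : HasDerivAt (fun c : ℝ => c ^ 6 * F v) (6 * F v) 1 := by
      simpa using (hasDerivAt_pow 6 (1:ℝ)).mul_const (F v)
    have heq2 : (fun c : ℝ => F (c • v)) =ᶠ[nhds (1:ℝ)] fun c => c ^ 6 * F v := by
      filter_upwards [Ioi_mem_nhds (by norm_num : (0:ℝ) < 1)] with c hc
      exact hhom c (le_of_lt hc) v
    have h3 : HasDerivAt (fun c : ℝ => F (c • v)) (6 * F v) 1 := h2.congr_of_eventuallyEq heq2
    have h4 : fderiv ℝ F v v = 6 * F v := h1.unique h3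
    rw [gradient, InnerProductSpace.toDual_symm_apply, h4]
  -- Bound for F
  obtain ⟨K, hK0, hKb⟩ : ∃ K : ℝ, 0 ≤ K ∧ ∀ y, |F y| ≤ K * ‖y‖ ^ 6 := by
    obtain ⟨K, hK⟩ := (isCompact_closedBall (0 : EuclideanSpace ℝ (Fin m))
      1).exists_bound_of_continuousOn hF.continuous.norm.continuousOn
    refine ⟨max K 0, le_max_right _ _, fun y => ?_⟩
    rcases eq_or_ne y 0 with rfl | hy
    · have h0 : F (0 : EuclideanSpace ℝ (Fin m)) = 0 := by simpa using hhom 0 le_rfl 0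
      simp [h0]
    · have hny : 0 < ‖y‖ := norm_pos_iff.2 hy
      have hu : ‖y‖⁻¹ • y ∈ closedBall (0 : EuclideanSpace ℝ (Fin m)) 1 := by
        simp [norm_smul, abs_of_pos (inv_pos.2 hny), inv_mul_cancel₀ hny.ne']
      have hy' : F y = ‖y‖ ^ 6 * F (‖y‖⁻¹ • y) := by
        have := hhom ‖y‖ (norm_nonneg y) (‖y‖⁻¹ • y)
        rw [smul_smul, mul_inv_cancel₀ hny.ne', one_smul] at this
        rw [this]
      rw [hy', abs_mul, abs_pow, abs_norm]
      calc ‖y‖ ^ 6 * |F (‖y‖⁻¹ • y)| ≤ ‖y‖ ^ 6 * max K 0 := by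
            apply mul_le_mul_of_nonneg_left _ (by positivity)
            have h1 : |F (‖y‖⁻¹ • y)| ≤ K := by simpa using hK _ hu
            exact h1.trans (le_max_left K 0)
        _ = max K 0 * ‖y‖ ^ 6 := mul_comm _ _
  -- basic facts on gradSq
  have hgs_nonneg : ∀ x, 0 ≤ gradSq Q x := fun x =>
    Finset.sum_nonneg fun i _ => sq_nonneg _
  have hgs_cont : Continuous (gradSq Q) := by
    unfold gradSq
    exact continuous_finset_sum _ fun i _ =>
      (((ContinuousLinearMap.apply ℝ (EuclideanSpace ℝ (Fin m))
        (EuclideanSpace.single i (1:ℝ))).continuous.comp hDQc).norm.pow 2)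
  have hgs_bound : ∀ x, gradSq Q x ≤ (C / (1 + ‖x‖) ^ 2) ^ 2 := by
    intro x
    have h1 := hdecay' x
    nlinarith [Real.sq_sqrt (hgs_nonneg x), Real.sqrt_nonneg (gradSq Q x)]
  have hpd_bound : ∀ x i, ‖pdQ Q i x‖ ≤ C / (1 + ‖x‖) ^ 2 := by
    intro x i
    have h1 : ‖pdQ Q i x‖ = Real.sqrt (‖pdQ Q i x‖ ^ 2) := by
      rw [Real.sqrt_sq (norm_nonneg _)]
    rw [h1]
    refine le_trans (Real.sqrt_le_sqrt ?_) (hdecay' x)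
    exact Finset.single_le_sum
      (f := fun j => ‖fderiv ℝ Q x (EuclideanSpace.single j 1)‖ ^ 2)
      (fun j _ => sq_nonneg _) (Finset.mem_univ i)
  -- Integrability
  have h1x : ∀ x : EuclideanSpace ℝ (Fin 3), (0:ℝ) < 1 + ‖x‖ := fun x => by positivity
  have hrp : ∀ (k : ℕ) (x : EuclideanSpace ℝ (Fin 3)),
      (1 + ‖x‖) ^ (-(k:ℝ)) = ((1 + ‖x‖) ^ k)⁻¹ := fun k x => by
    rw [Real.rpow_neg (h1x x).le, Real.rpow_natCast]
  have hint4 : Integrable (fun x : EuclideanSpace ℝ (Fin 3) => C^2 * (1 + ‖x‖) ^ (-(4:ℝ))) :=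
    (integrable_one_add_norm (by norm_num [finrank_euclideanSpace])).const_mul _
  have hint6 : Integrable (fun x : EuclideanSpace ℝ (Fin 3) => (K*C^6) * (1 + ‖x‖) ^ (-(6:ℝ))) :=
    (integrable_one_add_norm (by norm_num [finrank_euclideanSpace])).const_mul _
  have int1 : Integrable (fun x => gradSq Q x) := by
    refine hint4.mono' hgs_cont.aestronglyMeasurable (ae_of_all _ fun x => ?_)
    rw [Real.norm_of_nonneg (hgs_nonneg x)]
    calc gradSq Q x ≤ (C / (1 + ‖x‖) ^ 2) ^ 2 := hgs_bound x
      _ = C^2 * (1 + ‖x‖) ^ (-(4:ℝ)) := by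
          have : (-(4:ℝ)) = -((4:ℕ):ℝ) := by norm_num
          rw [this, hrp 4 x, div_pow, ← pow_mul, div_eq_mul_inv]
  have int2 : Integrable (fun x => F (Q x)) := by
    refine hint6.mono' (hF.continuous.comp hQc).aestronglyMeasurable (ae_of_all _ fun x => ?_)
    have h2 : ‖Q x‖ ^ 6 ≤ (C / (1 + ‖x‖)) ^ 6 :=
      pow_le_pow_left₀ (norm_nonneg _) (hdecay x) 6
    calc ‖F (Q x)‖ = |F (Q x)| := rfl
      _ ≤ K * ‖Q x‖ ^ 6 := hKb _
      _ ≤ K * (C / (1 + ‖x‖)) ^ 6 := by nlinarith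
      _ = K * C ^ 6 * (1 + ‖x‖) ^ (-(6:ℝ)) := by
          have : (-(6:ℝ)) = -((6:ℕ):ℝ) := by norm_num
          rw [this, hrp 6 x, div_pow, div_eq_mul_inv]; ring
  -- pointwise derivative of `gfun`
  have hgder : ∀ (i : Fin 3) (y : Fin 3 → ℝ), HasFDerivAt (gfun Q i) (gder Q i y) y := by
    intro i y
    have hu : HasFDerivAt (fun x => pdQ Q i x)
        ((ContinuousLinearMap.apply ℝ (EuclideanSpace ℝ (Fin m))
          (EuclideanSpace.single i (1:ℝ))).comp
            (fderiv ℝ (fderiv ℝ Q) (eL3.symm y))) (eL3.symm y) :=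
      (ContinuousLinearMap.apply ℝ (EuclideanSpace ℝ (Fin m))
        (EuclideanSpace.single i (1:ℝ))).hasFDerivAt.comp (eL3.symm y) (hB (eL3.symm y))
    have hv : HasFDerivAt Q (fderiv ℝ Q (eL3.symm y)) (eL3.symm y) :=
      (hQ1 (eL3.symm y)).hasFDerivAt
    have hinner := hu.inner ℝ hv
    have hsymm : HasFDerivAt (⇑eL3.symm)
        (eL3.symm : (Fin 3 → ℝ) →L[ℝ] EuclideanSpace ℝ (Fin 3)) y := eL3.symm.hasFDerivAt
    exact hinner.comp y hsymm
  -- value of the divergence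
  have hlap : ∀ x : EuclideanSpace ℝ (Fin 3), lap3 Q x
      = ∑ i : Fin 3, fderiv ℝ (fderiv ℝ Q) x (EuclideanSpace.single i 1)
          (EuclideanSpace.single i 1) := by
    intro x
    unfold lap3
    refine Finset.sum_congr rfl fun i _ => ?_
    have hu : HasFDerivAt (fun y => fderiv ℝ Q y (EuclideanSpace.single i (1:ℝ)))
        ((ContinuousLinearMap.apply ℝ (EuclideanSpace ℝ (Fin m))
          (EuclideanSpace.single i (1:ℝ))).comp (fderiv ℝ (fderiv ℝ Q) x)) x :=
      (ContinuousLinearMap.apply ℝ (EuclideanSpace ℝ (Fin m))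
        (EuclideanSpace.single i (1:ℝ))).hasFDerivAt.comp x (hB x)
    rw [hu.fderiv]
    rfl
  have hsum : ∀ y : Fin 3 → ℝ,
      ∑ i : Fin 3, gder Q i y (Pi.single i 1)
        = gradSq Q (eL3.symm y) - 6 * F (Q (eL3.symm y)) := by
    intro y
    have hterm : ∀ i : Fin 3, gder Q i y (Pi.single i 1)
        = (inner ℝ (pdQ Q i (eL3.symm y)) (pdQ Q i (eL3.symm y)) : ℝ)
          + inner ℝ (fderiv ℝ (fderiv ℝ Q) (eL3.symm y) (EuclideanSpace.single i 1)
              (EuclideanSpace.single i 1)) (Q (eL3.symm y)) := by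
      intro i
      show (fderivInnerCLM ℝ (pdQ Q i (eL3.symm y), Q (eL3.symm y)))
          (fderiv ℝ (fderiv ℝ Q) (eL3.symm y) (EuclideanSpace.single i 1)
            (EuclideanSpace.single i 1),
           fderiv ℝ Q (eL3.symm y) (EuclideanSpace.single i 1)) = _
      rw [fderivInnerCLM_apply]
      rw [real_inner_comm]
      rfl
    rw [Finset.sum_congr rfl fun i _ => hterm i, Finset.sum_add_distrib]
    have h1 : ∑ i : Fin 3, (inner ℝ (pdQ Q i (eL3.symm y)) (pdQ Q i (eL3.symm y)) : ℝ)
        = gradSq Q (eL3.symm y) := by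
      unfold gradSq pdQ
      exact Finset.sum_congr rfl fun i _ => real_inner_self_eq_norm_sq _
    have h2 : ∑ i : Fin 3,
        (inner ℝ (fderiv ℝ (fderiv ℝ Q) (eL3.symm y) (EuclideanSpace.single i 1)
          (EuclideanSpace.single i 1)) (Q (eL3.symm y)) : ℝ)
        = inner ℝ (lap3 Q (eL3.symm y)) (Q (eL3.symm y)) := by
      rw [hlap, sum_inner]
    rw [h1, h2]
    have h3 : lap3 Q (eL3.symm y) = -gradient F (Q (eL3.symm y)) := by
      rw [← heq (eL3.symm y), neg_neg]
    rw [h3, inner_neg_left, euler]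
    ring
  -- continuity and bounds for gfun
  have hgcont : ∀ i : Fin 3, Continuous (gfun Q i) := by
    intro i
    apply Continuous.inner
    · exact ((ContinuousLinearMap.apply ℝ (EuclideanSpace ℝ (Fin m))
        (EuclideanSpace.single i (1:ℝ))).continuous.comp hDQc).comp eL3.symm.continuous
    · exact hQc.comp eL3.symm.continuous
  have habs : ∀ (z : EuclideanSpace ℝ (Fin 3)) (i : Fin 3), |z i| ≤ ‖z‖ := by
    intro z i
    rw [EuclideanSpace.norm_eq, ← Real.sqrt_sq_eq_abs]
    apply Real.sqrt_le_sqrt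
    have := Finset.single_le_sum (f := fun j => ‖z j‖ ^ 2)
      (fun j _ => sq_nonneg _) (Finset.mem_univ i)
    simpa [sq_abs] using this
  have hg_bound : ∀ (i : Fin 3) (z : Fin 3 → ℝ) (R : ℝ), 0 ≤ R → |z i| = R →
      |gfun Q i z| ≤ C ^ 2 / (1 + R) ^ 3 := by
    intro i z R hR hzi
    have h1 : |gfun Q i z| ≤ ‖pdQ Q i (eL3.symm z)‖ * ‖Q (eL3.symm z)‖ :=
      abs_real_inner_le_norm _ _
    have h2 : ‖pdQ Q i (eL3.symm z)‖ * ‖Q (eL3.symm z)‖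
        ≤ (C / (1 + ‖eL3.symm z‖) ^ 2) * (C / (1 + ‖eL3.symm z‖)) :=
      mul_le_mul (hpd_bound _ i) (hdecay _) (norm_nonneg _) (by positivity)
    have h4 : R ≤ ‖eL3.symm z‖ := by
      rw [← hzi]
      exact habs (eL3.symm z) i
    have h5 : (C / (1 + ‖eL3.symm z‖) ^ 2) * (C / (1 + ‖eL3.symm z‖))
        = C ^ 2 / (1 + ‖eL3.symm z‖) ^ 3 := by
      field_simp
    have h6 : C ^ 2 / (1 + ‖eL3.symm z‖) ^ 3 ≤ C ^ 2 / (1 + R) ^ 3 := by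
      apply div_le_div_of_nonneg_left (by positivity) (by positivity)
      gcongr
    linarith
  -- the divergence as a function on `Fin 3 → ℝ`
  set D : (Fin 3 → ℝ) → ℝ := fun y => gradSq Q (eL3.symm y) - 6 * F (Q (eL3.symm y)) with hDdef
  have hDcont : Continuous D :=
    (hgs_cont.comp eL3.symm.continuous).sub
      (continuous_const.mul ((hF.continuous.comp hQc).comp eL3.symm.continuous))
  have hDfun : (fun y : Fin 3 → ℝ => ∑ i : Fin 3, gder Q i y (Pi.single i 1)) = D :=
    funext hsum
  set S : ℕ → ℝ := fun n => ∑ i : Fin 3,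
      ((∫ z in Icc ((fun _ : Fin 3 => -((n:ℝ)+1)) ∘ i.succAbove)
          ((fun _ : Fin 3 => (n:ℝ)+1) ∘ i.succAbove),
          gfun Q i (i.insertNth ((n:ℝ)+1) z)) -
        ∫ z in Icc ((fun _ : Fin 3 => -((n:ℝ)+1)) ∘ i.succAbove)
          ((fun _ : Fin 3 => (n:ℝ)+1) ∘ i.succAbove),
          gfun Q i (i.insertNth (-((n:ℝ)+1)) z)) with hSdef
  have key : ∀ n : ℕ,
      (∫ y in Icc (fun _ : Fin 3 => -((n:ℝ)+1)) (fun _ : Fin 3 => (n:ℝ)+1), D y) = S n := by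
    intro n
    have hle : (fun _ : Fin 3 => -((n:ℝ)+1)) ≤ fun _ : Fin 3 => (n:ℝ)+1 := fun i => by
      have : (0:ℝ) ≤ (n:ℝ) := Nat.cast_nonneg n
      simp only
      linarith
    have Hi : IntegrableOn (fun x => ∑ i : Fin 3, gder Q i x (Pi.single i 1))
        (Icc (fun _ : Fin 3 => -((n:ℝ)+1)) (fun _ : Fin 3 => (n:ℝ)+1)) := by
      rw [hDfun]
      exact hDcont.continuousOn.integrableOn_compact isCompact_Icc
    have h := MeasureTheory.integral_divergence_of_hasFDerivAt_off_countable'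
      (n := 2) (fun _ : Fin 3 => -((n:ℝ)+1)) (fun _ : Fin 3 => (n:ℝ)+1) hle (gfun Q) (gder Q)
      ∅ Set.countable_empty (fun i => (hgcont i).continuousOn)
      (fun x _ i => hgder i x) Hi
    rw [hDfun] at h
    exact h
  -- the integral of `D` over all of space
  have hmp : MeasurePreserving (⇑(MeasurableEquiv.toLp 2 (Fin 3 → ℝ)))
      volume volume := (EuclideanSpace.volume_preserving_symm_measurableEquiv_toLp (Fin 3)).symm
  have h0int : Integrable (fun x => gradSq Q x - 6 * F (Q x)) :=
    int1.sub (int2.const_mul 6)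
  have hDint : Integrable D :=
    (hmp.integrable_comp_emb
      (MeasurableEquiv.measurableEmbedding (MeasurableEquiv.toLp 2 (Fin 3 → ℝ)))).2 h0int
  have hmono : Monotone (fun n : ℕ =>
      Icc (fun _ : Fin 3 => -((n:ℝ)+1)) (fun _ : Fin 3 => (n:ℝ)+1)) := by
    intro p q hpq
    have hpq' : ((p:ℝ)+1) ≤ (q:ℝ)+1 := by
      have : (p:ℝ) ≤ (q:ℝ) := Nat.cast_le.2 hpq
      linarith
    exact Icc_subset_Icc (fun i => by simp only; linarith) (fun i => hpq')
  have hunion : (⋃ n : ℕ, Icc (fun _ : Fin 3 => -((n:ℝ)+1)) (fun _ : Fin 3 => (n:ℝ)+1))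
      = univ := by
    ext y
    simp only [mem_iUnion, mem_Icc, mem_univ, iff_true]
    obtain ⟨n, hn⟩ := exists_nat_ge ‖y‖
    have h3 : ∀ i, |y i| ≤ (n:ℝ) + 1 := by
      intro i
      have h1 : |y i| ≤ ‖y‖ := by simpa using norm_le_pi_norm y i
      have h2 : ‖y‖ ≤ (n:ℝ) + 1 := by linarith
      linarith
    exact ⟨n, fun i => (abs_le.1 (h3 i)).1, fun i => (abs_le.1 (h3 i)).2⟩
  have hlim1 : Tendsto S atTop (𝓝 (∫ y, D y)) := by
    have h := tendsto_setIntegral_of_monotone (fun n => measurableSet_Icc) hmono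
      (by rw [hunion]; exact hDint.integrableOn)
    rw [hunion, setIntegral_univ] at h
    exact h.congr key
  -- bound on the boundary terms
  have hface : ∀ n : ℕ, ‖S n‖ ≤ 24 * C ^ 2 / ((n:ℝ)+1) := by
    intro n
    set R : ℝ := (n:ℝ)+1 with hRdef
    have hR : 0 < R := by positivity
    have hfb : ∀ (i : Fin 3) (c : ℝ), |c| = R →
        ‖∫ z in Icc ((fun _ : Fin 3 => -R) ∘ i.succAbove) ((fun _ : Fin 3 => R) ∘ i.succAbove),
          gfun Q i (i.insertNth c z)‖ ≤ C ^ 2 / (1 + R) ^ 3 * (2 * R) ^ 2 := by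
      intro i c hc
      have hvol : volume (Icc ((fun _ : Fin 3 => -R) ∘ i.succAbove)
          ((fun _ : Fin 3 => R) ∘ i.succAbove)) < ⊤ := isCompact_Icc.measure_lt_top
      have hbd : ∀ z ∈ Icc ((fun _ : Fin 3 => -R) ∘ i.succAbove)
          ((fun _ : Fin 3 => R) ∘ i.succAbove),
          ‖gfun Q i (i.insertNth c z)‖ ≤ C ^ 2 / (1 + R) ^ 3 := by
        intro z _
        have : |(i.insertNth c z : Fin 3 → ℝ) i| = R := by
          rw [show (i.insertNth c z : Fin 3 → ℝ) i = c from
            Fin.insertNth_apply_same (α := fun _ : Fin 3 => ℝ) i c z]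
          exact hc
        exact hg_bound i (i.insertNth c z) R hR.le this
      have h := norm_setIntegral_le_of_norm_le_const hvol hbd
      rw [measureReal_def] at h
      have hvtr : (volume (Icc ((fun _ : Fin 3 => -R) ∘ i.succAbove)
          ((fun _ : Fin 3 => R) ∘ i.succAbove))).toReal = (2 * R) ^ 2 := by
        rw [Real.volume_Icc_pi_toReal (fun j => by
          simp only [Function.comp_apply]; linarith)]
        simp only [Function.comp_apply]
        rw [Finset.prod_const]
        norm_num [Finset.card_univ]
        ring
      rw [hvtr] at h
      exact h
    have hterm : ∀ i : Fin 3,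
        ‖(∫ z in Icc ((fun _ : Fin 3 => -R) ∘ i.succAbove)
            ((fun _ : Fin 3 => R) ∘ i.succAbove), gfun Q i (i.insertNth R z)) -
          ∫ z in Icc ((fun _ : Fin 3 => -R) ∘ i.succAbove)
            ((fun _ : Fin 3 => R) ∘ i.succAbove), gfun Q i (i.insertNth (-R) z)‖
          ≤ 2 * (C ^ 2 / (1 + R) ^ 3 * (2 * R) ^ 2) := by
      intro i
      have h1 := hfb i R (abs_of_pos hR)
      have h2 := hfb i (-R) (by rw [abs_neg]; exact abs_of_pos hR)
      calc ‖_ - _‖ ≤ _ + _ := norm_sub_le _ _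
        _ ≤ 2 * (C ^ 2 / (1 + R) ^ 3 * (2 * R) ^ 2) := by linarith
    have hS : ‖S n‖ ≤ 3 * (2 * (C ^ 2 / (1 + R) ^ 3 * (2 * R) ^ 2)) := by
      rw [hSdef]
      refine (norm_sum_le _ _).trans ?_
      have := Finset.sum_le_sum (fun i (_ : i ∈ (Finset.univ : Finset (Fin 3))) => hterm i)
      calc (∑ i : Fin 3, ‖_‖) ≤ ∑ i : Fin 3, 2 * (C ^ 2 / (1 + R) ^ 3 * (2 * R) ^ 2) := this
        _ = 3 * (2 * (C ^ 2 / (1 + R) ^ 3 * (2 * R) ^ 2)) := by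
            rw [Finset.sum_const]
            norm_num [Finset.card_univ]
    have hfin : 3 * (2 * (C ^ 2 / (1 + R) ^ 3 * (2 * R) ^ 2)) ≤ 24 * C ^ 2 / R := by
      have e1 : 3 * (2 * (C ^ 2 / (1 + R) ^ 3 * (2 * R) ^ 2))
          = 24 * C ^ 2 * R ^ 2 / (1 + R) ^ 3 := by
        ring
      rw [e1, div_le_div_iff₀ (by positivity) hR]
      nlinarith [mul_nonneg (sq_nonneg C) hR.le, mul_nonneg (sq_nonneg C) (sq_nonneg R),
        sq_nonneg C]
    exact hS.trans hfin
  have hlim2 : Tendsto (fun n : ℕ => 24 * C ^ 2 / ((n:ℝ)+1)) atTop (𝓝 0) :=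
    Tendsto.div_atTop tendsto_const_nhds
      (tendsto_atTop_add_const_right _ 1 tendsto_natCast_atTop_atTop)
  have hlim3 : Tendsto S atTop (𝓝 0) := squeeze_zero_norm hface hlim2
  have hz : (∫ y, D y) = 0 := tendsto_nhds_unique hlim1 hlim3
  have htrans : (∫ y, D y) = ∫ x, (gradSq Q x - 6 * F (Q x)) :=
    hmp.integral_comp (MeasurableEquiv.measurableEmbedding _)
      (fun x : EuclideanSpace ℝ (Fin 3) => gradSq Q x - 6 * F (Q x))
  have hsplit : (∫ x, (gradSq Q x - 6 * F (Q x)))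
      = (∫ x, gradSq Q x) - 6 * ∫ x, F (Q x) := by
    rw [integral_sub int1 (int2.const_mul 6), integral_const_mul]
  have hid : (∫ x, gradSq Q x) = 6 * ∫ x, F (Q x) := by
    have h := hz
    rw [htrans, hsplit] at h
    linarith
  exact ⟨int1, int2, hid, by linarith⟩
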